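/- Let g : ℝ^n → ℝ ∪ {+∞} be a proper convex function, let u, x̂ ∈ ℝ^n and v ∈ ℝ^n. If v ∈ ∂g(u) and v belongs to the topological interior of ∂g(x̂), then u = x̂. (This is the key fact underlying variable screening: a subgradient attained at an interior point of the subdifferential at x̂ can only occur at x̂ itself.) -/
import Mathlib


open scoped BigOperators

noncomputable section

/-- A function to `EReal` is proper if it is somewhere finite and nowhere `-∞`. -/
def ERealProper {E : Type*} (g : E → EReal) : Prop :=
  (∃ x, g x ≠ ⊤) ∧ ∀ x, g x ≠ ⊥

/-- Convexity for an `EReal`-valued function on a real vector space. -/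
def ERealConvexOn {E : Type*} [AddCommMonoid E] [Module ℝ E] (g : E → EReal) : Prop :=
  ∀ x y : E, ∀ a b : ℝ, 0 ≤ a → 0 ≤ b → a + b = 1 →
    g (a • x + b • y) ≤ (a : EReal) * g x + (b : EReal) * g y

/-- The subdifferential `∂g(u) = {v : ∀ y, g(y) ≥ g(u) + ⟨v, y − u⟩}`. -/
def subdiff {n : ℕ} (g : (Fin n → ℝ) → EReal) (u : Fin n → ℝ) : Set (Fin n → ℝ) :=
  {v | ∀ y, g u + ((∑ l, v l * (y l - u l) : ℝ) : EReal) ≤ g y}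

/-- If `v ∈ ∂g(u)` and `v` lies in the topological interior of `∂g(x̂)`, then `u = x̂`. -/
theorem eq_of_mem_interior_subdiff
    {n : ℕ} (g : (Fin n → ℝ) → EReal)
    (hproper : ERealProper g) (hconv : ERealConvexOn g)
    (u xhat v : Fin n → ℝ)
    (hv : v ∈ subdiff g u)
    (hint : v ∈ interior (subdiff g xhat)) :
    u = xhat := by
  classical
  obtain ⟨⟨x0, hx0⟩, hbot⟩ := hproper
  by_contra hne
  set d : Fin n → ℝ := u - xhat with hd
  have hd0 : d ≠ 0 := sub_ne_zero.2 hne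
  have hdn : 0 < ‖d‖ := norm_pos_iff.2 hd0
  obtain ⟨ε, hε, hball⟩ := Metric.mem_nhds_iff.1 (mem_interior_iff_mem_nhds.1 hint)
  set t := ε / (2 * ‖d‖) with ht
  have ht0 : 0 < t := div_pos hε (by positivity)
  have hw : v + t • d ∈ subdiff g xhat := by
    apply hball
    have hdist : dist (v + t • d) v = t * ‖d‖ := by
      rw [dist_eq_norm, add_sub_cancel_left, norm_smul, Real.norm_eq_abs, abs_of_pos ht0]
    have htd : t * ‖d‖ < ε := by
      rw [ht, div_mul_eq_mul_div]
      rw [div_lt_iff₀ (by positivity)]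
      nlinarith
    rw [Metric.mem_ball, hdist]
    exact htd
  -- finiteness
  have hgu_ne : g u ≠ ⊤ := by
    intro h
    have h1 := hv x0
    rw [h, EReal.top_add_coe] at h1
    exact hx0 (top_le_iff.1 h1)
  have hgx_ne : g xhat ≠ ⊤ := by
    intro h
    have h1 := hw x0
    rw [h, EReal.top_add_coe] at h1
    exact hx0 (top_le_iff.1 h1)
  have hae : ((g u).toReal : EReal) = g u := EReal.coe_toReal hgu_ne (hbot u)
  have hbe : ((g xhat).toReal : EReal) = g xhat := EReal.coe_toReal hgx_ne (hbot xhat)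
  set a := (g u).toReal with ha
  set b := (g xhat).toReal with hb
  have h1 := hv xhat
  have h2 := hw u
  rw [← hae, ← hbe, ← EReal.coe_add, EReal.coe_le_coe_iff] at h1
  rw [← hae, ← hbe, ← EReal.coe_add, EReal.coe_le_coe_iff] at h2
  set S : ℝ := ∑ l, v l * (xhat l - u l) with hS
  set T : ℝ := ∑ l, (v + t • d) l * (u l - xhat l) with hT
  have hST : S + T = t * ∑ l, (u l - xhat l) ^ 2 := by
    rw [hS, hT, ← Finset.sum_add_distrib, Finset.mul_sum]
    apply Finset.sum_congr rfl
    intro l _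
    simp only [Pi.add_apply, Pi.smul_apply, hd, Pi.sub_apply, smul_eq_mul]
    ring
  obtain ⟨l0, hl0⟩ := Function.ne_iff.1 hne
  have hQ : 0 < ∑ l, (u l - xhat l) ^ 2 := by
    apply Finset.sum_pos' (fun l _ => sq_nonneg _)
    exact ⟨l0, Finset.mem_univ _, pow_pos (abs_pos.2 (sub_ne_zero.2 hl0)) 2 |>.trans_eq (sq_abs _)⟩
  nlinarith [mul_pos ht0 hQ]
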